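/- Let D_0, D_1, …, D_{l−1} be a nondecreasing sequence of positive integers that is the partial distance profile of some l×l invertible binary kernel. Then for every i with 0 ≤ i < l, the inequality Σ_{i'=i}^{l−1} 2^{l−i'} · D_{i'} ≤ 2^{l−i} · l holds. -/

import Mathlib

/-- Hamming distance from a vector `v` to a set (code) `C` in `𝔽₂ⁿ`. -/
noncomputable def distTo {n : ℕ} (C : Set (Fin n → ZMod 2)) (v : Fin n → ZMod 2) : ℕ :=
  sInf ((fun c => hammingDist v c) '' C)

/-- Minimum distance of a code: minimum Hamming weight of its nonzero elements. -/
noncomputable def minDist {n : ℕ} (C : Set (Fin n → ZMod 2)) : ℕ :=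
  sInf (hammingNorm '' (C \ {0}))

/-- The kernel code `C_K^{(φ)}`: the span of rows `φ, …, l−1` of `K`. -/
def kernelCode {l : ℕ} (K : Matrix (Fin l) (Fin l) (ZMod 2)) (φ : ℕ) :
    Submodule (ZMod 2) (Fin l → ZMod 2) :=
  Submodule.span (ZMod 2) {v | ∃ i : Fin l, φ ≤ (i : ℕ) ∧ v = K i}

/-- The `i`-th partial distance of `K`: distance from row `i` to the span of rows `i+1, …, l−1`. -/
noncomputable def PD {l : ℕ} (K : Matrix (Fin l) (Fin l) (ZMod 2)) (i : Fin l) : ℕ :=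
  distTo (kernelCode K ((i : ℕ) + 1) : Set (Fin l → ZMod 2)) (K i)

section Helpers

variable {l : ℕ} (K : Matrix (Fin l) (Fin l) (ZMod 2))

lemma kernelCode_eq_span_range (φ : ℕ) :
    kernelCode K φ = Submodule.span (ZMod 2)
      (Set.range (fun j : {i : Fin l // φ ≤ (i : ℕ)} => K j.1)) := by
  unfold kernelCode
  congr 1
  ext v
  constructor
  · rintro ⟨i, hi, rfl⟩; exact ⟨⟨i, hi⟩, rfl⟩
  · rintro ⟨⟨i, hi⟩, rfl⟩; exact ⟨i, hi, rfl⟩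

lemma kernelCode_anti {φ ψ : ℕ} (h : φ ≤ ψ) : kernelCode K ψ ≤ kernelCode K φ := by
  apply Submodule.span_mono
  rintro v ⟨i, hi, rfl⟩
  exact ⟨i, le_trans h hi, rfl⟩

lemma finrank_kernelCode (hK : IsUnit K.det) {φ : ℕ} (hφ : φ ≤ l) :
    Module.finrank (ZMod 2) (kernelCode K φ) = l - φ := by
  have hLI : LinearIndependent (ZMod 2) (fun i : Fin l => K i) :=
    Matrix.linearIndependent_rows_iff_isUnit.2 ((Matrix.isUnit_iff_isUnit_det K).2 hK)
  have hLI' : LinearIndependent (ZMod 2) (fun j : {i : Fin l // φ ≤ (i : ℕ)} => K j.1) :=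
    hLI.comp _ Subtype.val_injective
  rw [kernelCode_eq_span_range, finrank_span_eq_card hLI']
  -- card of subtype
  rcases eq_or_lt_of_le hφ with rfl | hlt
  · rw [Nat.sub_self]
    rw [Fintype.card_eq_zero_iff]
    constructor
    rintro ⟨i, hi⟩
    omega
  · have : Fintype.card {i : Fin l // φ ≤ (i : ℕ)}
        = (Finset.Ici (⟨φ, hlt⟩ : Fin l)).card := by
      rw [Fintype.card_subtype]
      congr 1
      ext j
      simp [Fin.le_def]
    rw [this, Fin.card_Ici]

lemma card_kernelCode (hK : IsUnit K.det) {φ : ℕ} (hφ : φ ≤ l) :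
    Nat.card (kernelCode K φ) = 2 ^ (l - φ) := by
  have : Fintype (kernelCode K φ) := Fintype.ofFinite _
  rw [Nat.card_eq_fintype_card, Module.card_eq_pow_finrank (K := ZMod 2), finrank_kernelCode K hK hφ, ZMod.card]

end Helpers

section Weight
variable {l : ℕ} (K : Matrix (Fin l) (Fin l) (ZMod 2))

lemma pd_le_weight (hmono : ∀ i j : Fin l, i ≤ j → PD K i ≤ PD K j)
    (φ : Fin l) {c : Fin l → ZMod 2} (hc : c ∈ kernelCode K (φ : ℕ)) (hc0 : c ≠ 0) :
    PD K φ ≤ hammingNorm c := by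
  classical
  rw [kernelCode_eq_span_range] at hc
  obtain ⟨a, ha⟩ := (Submodule.mem_span_range_iff_exists_fun (ZMod 2)).mp hc
  set T : Finset {i : Fin l // (φ : ℕ) ≤ (i : ℕ)} :=
    Finset.univ.filter (fun j => a j ≠ 0) with hT
  have hTne : T.Nonempty := by
    by_contra h
    rw [Finset.not_nonempty_iff_eq_empty] at h
    apply hc0
    rw [← ha]
    apply Finset.sum_eq_zero
    intro j _
    have hz : a j = 0 := by
      by_contra hne
      have hjT : j ∈ T := by simp [hT, hne]
      simp [h] at hjT
    rw [hz, zero_smul]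
  obtain ⟨j0, hj0T, hj0min⟩ := T.exists_min_image (fun j => ((j : Fin l) : ℕ)) hTne
  have haj0 : a j0 = 1 := by
    have h1 : a j0 ≠ 0 := by simpa [hT] using hj0T
    revert h1; generalize a j0 = x; revert x; decide
  have hrest : ∑ j ∈ Finset.univ.erase j0, a j • K j.1 ∈ kernelCode K ((j0.1 : ℕ) + 1) := by
    apply Submodule.sum_mem
    intro j hj
    by_cases hz : a j = 0
    · rw [hz, zero_smul]; exact Submodule.zero_mem _
    · apply Submodule.smul_mem
      apply Submodule.subset_span
      refine ⟨j.1, ?_, rfl⟩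
      have hjT : j ∈ T := by simp [hT, hz]
      have hle := hj0min j hjT
      have hne : j ≠ j0 := (Finset.mem_erase.mp hj).1
      have hne' : (j0.1 : ℕ) ≠ (j.1 : ℕ) := by
        intro h
        exact hne (Subtype.ext (Fin.ext h.symm))
      omega
  have hsum : K j0.1 + ∑ j ∈ Finset.univ.erase j0, a j • K j.1 = c := by
    rw [← ha, ← Finset.add_sum_erase _ _ (Finset.mem_univ j0), haj0, one_smul]
  set w := K j0.1 - c with hw
  have hwmem : w ∈ kernelCode K ((j0.1 : ℕ) + 1) := by
    have hweq : w = -(∑ j ∈ Finset.univ.erase j0, a j • K j.1) := by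
      rw [hw, ← hsum]; abel
    rw [hweq]; exact Submodule.neg_mem _ hrest
  have hdist : hammingNorm c = hammingDist (K j0.1) w := by
    rw [hammingDist_eq_hammingNorm, hw, show -K j0.1 + (K j0.1 - c) = -c by abel]; simp [hammingNorm]
  have hPDj0 : PD K j0.1 ≤ hammingNorm c := by
    rw [hdist]
    exact Nat.sInf_le ⟨w, hwmem, rfl⟩
  exact le_trans (hmono φ j0.1 (Fin.le_def.mpr j0.2)) hPDj0

end Weight

section Count
variable {l : ℕ} (K : Matrix (Fin l) (Fin l) (ZMod 2))

lemma double_count (S : Submodule (ZMod 2) (Fin l → ZMod 2))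
    [DecidablePred (· ∈ S)] :
    2 * ∑ c ∈ Finset.univ.filter (· ∈ S), hammingNorm c
      ≤ (Finset.univ.filter (· ∈ S)).card * l := by
  classical
  set Cs := Finset.univ.filter (· ∈ S) with hCs
  have hnorm : ∀ c : Fin l → ZMod 2,
      hammingNorm c = ∑ t : Fin l, (if c t ≠ 0 then 1 else 0) := by
    intro c
    rw [hammingNorm]
    rw [Finset.card_filter]
  have key : ∀ t, 2 * (Cs.filter (fun c => c t ≠ 0)).card ≤ Cs.card := by
    intro t
    by_cases hE : (Cs.filter (fun c => c t ≠ 0)).Nonempty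
    · obtain ⟨c0, hc0'⟩ := hE
      rw [Finset.mem_filter] at hc0'
      obtain ⟨hc0S, hc0t⟩ := hc0'
      rw [hCs, Finset.mem_filter] at hc0S
      have hadd : ∀ x y : ZMod 2, x ≠ 0 → y ≠ 0 → x + y = 0 := by decide
      have hmap : (Cs.filter (fun c => c t ≠ 0)).card
          ≤ (Cs.filter (fun c => ¬ c t ≠ 0)).card := by
        apply Finset.card_le_card_of_injOn (fun c => c + c0)
        · intro c hc
          rw [Finset.mem_coe, Finset.mem_filter] at hc
          obtain ⟨hcS, hct⟩ := hc
          rw [hCs, Finset.mem_filter] at hcS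
          rw [Finset.mem_coe, Finset.mem_filter, hCs, Finset.mem_filter]
          refine ⟨⟨Finset.mem_univ _, S.add_mem hcS.2 hc0S.2⟩, ?_⟩
          simp only [Pi.add_apply, ne_eq, not_not]
          exact hadd _ _ hct hc0t
        · intro a _ b _ hab
          exact add_left_injective c0 hab
      have htot := Finset.card_filter_add_card_filter_not
        (s := Cs) (fun c => c t ≠ 0)
      rw [two_mul]
      calc (Cs.filter (fun c => c t ≠ 0)).card + (Cs.filter (fun c => c t ≠ 0)).card
          ≤ (Cs.filter (fun c => c t ≠ 0)).card + (Cs.filter (fun c => ¬ c t ≠ 0)).card :=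
            Nat.add_le_add_left hmap _
        _ = Cs.card := htot
    · rw [Finset.not_nonempty_iff_eq_empty] at hE
      rw [hE]
      simp
  calc 2 * ∑ c ∈ Cs, hammingNorm c
      = 2 * ∑ t : Fin l, (Cs.filter (fun c => c t ≠ 0)).card := by
        congr 1
        simp_rw [hnorm]
        rw [Finset.sum_comm]
        congr 1
        ext t
        rw [Finset.card_filter]
    _ = ∑ t : Fin l, 2 * (Cs.filter (fun c => c t ≠ 0)).card := by
        rw [Finset.mul_sum]
    _ ≤ ∑ _t : Fin l, Cs.card := Finset.sum_le_sum (fun t _ => key t)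
    _ = Cs.card * l := by simp [mul_comm]

end Count

theorem stmt_9 {l : ℕ} (K : Matrix (Fin l) (Fin l) (ZMod 2)) (hK : IsUnit K.det)
    (hpos : ∀ i : Fin l, 0 < PD K i)
    (hmono : ∀ i j : Fin l, i ≤ j → PD K i ≤ PD K j) :
    ∀ i : ℕ, i < l →
      ∑ i' ∈ Finset.univ.filter (fun i' : Fin l => i ≤ (i' : ℕ)),
          2 ^ (l - (i' : ℕ)) * PD K i' ≤ 2 ^ (l - i) * l := by
  classical
  intro i hi
  set Cs : ℕ → Finset (Fin l → ZMod 2) :=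
    fun φ => Finset.univ.filter (· ∈ kernelCode K φ) with hCsdef
  have hcard : ∀ φ, φ ≤ l → (Cs φ).card = 2 ^ (l - φ) := by
    intro φ hφ
    have h2 : ((kernelCode K φ : Set (Fin l → ZMod 2))).toFinset = Cs φ := by
      ext c
      simp [hCsdef, Set.mem_toFinset]
    rw [← h2, ← Set.ncard_eq_toFinset_card', ← Nat.card_coe_set_eq]
    exact card_kernelCode K hK hφ
  have hsub : ∀ φ ψ : ℕ, φ ≤ ψ → Cs ψ ⊆ Cs φ := by
    intro φ ψ h c hc
    simp only [hCsdef, Finset.mem_filter] at hc ⊢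
    exact ⟨hc.1, kernelCode_anti K h hc.2⟩
  set F := Finset.univ.filter (fun i' : Fin l => i ≤ (i' : ℕ)) with hF
  set L : Fin l → Finset (Fin l → ZMod 2) :=
    fun i' => Cs (i' : ℕ) \ Cs ((i' : ℕ) + 1) with hL
  have hLcard : ∀ i' : Fin l, (L i').card = 2 ^ (l - (i' : ℕ) - 1) := by
    intro i'
    have hv : (i' : ℕ) < l := i'.2
    simp only [hL]
    rw [Finset.card_sdiff_of_subset (hsub _ _ (Nat.le_succ _)),
      hcard _ (le_of_lt hv), hcard _ hv]
    have h3 : l - ((i' : ℕ) + 1) = l - (i' : ℕ) - 1 := by omega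
    rw [h3]
    have h4 : (2 : ℕ) ^ (l - (i' : ℕ)) = 2 ^ (l - (i' : ℕ) - 1) * 2 := by
      rw [← pow_succ]
      congr 1
      omega
    omega
  have hLmem : ∀ i' : Fin l, ∀ c ∈ L i', c ∈ kernelCode K (i' : ℕ) ∧ c ≠ 0 := by
    intro i' c hc
    simp only [hL, Finset.mem_sdiff, hCsdef, Finset.mem_filter] at hc
    refine ⟨hc.1.2, ?_⟩
    rintro rfl
    exact hc.2 ⟨Finset.mem_univ _, Submodule.zero_mem _⟩
  have hdisj : (F : Set (Fin l)).PairwiseDisjoint L := by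
    have key : ∀ a b : Fin l, (a : ℕ) < (b : ℕ) → Disjoint (L a) (L b) := by
      intro a b h
      rw [Finset.disjoint_left]
      intro c hca hcb
      simp only [hL, Finset.mem_sdiff] at hca hcb
      exact hca.2 (hsub _ _ (by omega) hcb.1)
    intro a _ b _ hab
    rcases lt_trichotomy ((a : ℕ)) ((b : ℕ)) with h | h | h
    · exact key a b h
    · exact absurd (Fin.ext h) hab
    · exact (key b a h).symm
  have hW : 2 * ∑ c ∈ Cs i, hammingNorm c ≤ (Cs i).card * l := by
    simp only [hCsdef]
    exact double_count (kernelCode K i)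
  have hlayer : ∀ i' ∈ F, 2 ^ (l - (i' : ℕ) - 1) * PD K i' ≤ ∑ c ∈ L i', hammingNorm c := by
    intro i' _
    rw [← hLcard i']
    have h := Finset.card_nsmul_le_sum (L i') hammingNorm (PD K i')
      (fun c hc => pd_le_weight K hmono i' (hLmem i' c hc).1 (hLmem i' c hc).2)
    simpa [smul_eq_mul] using h
  have hbu : F.biUnion L ⊆ Cs i := by
    intro c hc
    rw [Finset.mem_biUnion] at hc
    obtain ⟨i', hi'F, hci'⟩ := hc
    have hc1 : c ∈ Cs (i' : ℕ) := (Finset.mem_sdiff.mp hci').1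
    have hii' : i ≤ (i' : ℕ) := by
      rw [hF, Finset.mem_filter] at hi'F
      exact hi'F.2
    exact hsub i (i' : ℕ) hii' hc1
  have hchain : ∑ i' ∈ F, 2 ^ (l - (i' : ℕ) - 1) * PD K i' ≤ ∑ c ∈ Cs i, hammingNorm c :=
    calc ∑ i' ∈ F, 2 ^ (l - (i' : ℕ) - 1) * PD K i'
        ≤ ∑ i' ∈ F, ∑ c ∈ L i', hammingNorm c := Finset.sum_le_sum hlayer
      _ = ∑ c ∈ F.biUnion L, hammingNorm c := (Finset.sum_biUnion hdisj).symm
      _ ≤ ∑ c ∈ Cs i, hammingNorm c :=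
          Finset.sum_le_sum_of_subset hbu
  have hfin : ∑ i' ∈ F, 2 ^ (l - (i' : ℕ)) * PD K i'
      = 2 * ∑ i' ∈ F, 2 ^ (l - (i' : ℕ) - 1) * PD K i' := by
    rw [Finset.mul_sum]
    apply Finset.sum_congr rfl
    intro i' _
    have hv : (i' : ℕ) < l := i'.2
    have h2 : (2 : ℕ) ^ (l - (i' : ℕ)) = 2 * 2 ^ (l - (i' : ℕ) - 1) := by
      rw [← pow_succ']
      congr 1
      omega
    rw [h2]
    ring
  rw [hfin]
  calc 2 * ∑ i' ∈ F, 2 ^ (l - (i' : ℕ) - 1) * PD K i'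
      ≤ 2 * ∑ c ∈ Cs i, hammingNorm c := Nat.mul_le_mul_left _ hchain
    _ ≤ (Cs i).card * l := hW
    _ = 2 ^ (l - i) * l := by rw [hcard i (le_of_lt hi)]
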